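/- Let vectors m_{x,a} ∈ ℝᵈ be given for x ∈ X, a ∈ A, and let S : (ℝ^{X×A}, ‖·‖_{1(∞)}) → ℓ₂ᵈ be the linear map G ↦ ∑_{x,a} G(x,a)·m_{x,a}. Then for every x ∈ X, the squared operator norm satisfies ‖S‖² ≥ ∑_{a∈A} ‖m_{x,a}‖₂². -/

import Mathlib

open Finset

/-- The `1(∞)`-norm of `G ∈ ℝ^{X×A}`: `∑_x max_a |G (x,a)|`. -/
noncomputable def normOneInf {X A : Type*} [Fintype X] [Fintype A] [Nonempty A]
    (G : X × A → ℝ) : ℝ :=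
  ∑ x : X, Finset.univ.sup' Finset.univ_nonempty (fun a : A => |G (x, a)|)

/-- The operator norm of `G ↦ ∑_{x,a} G(x,a) • m_{x,a}` from
`(ℝ^{X×A}, ‖·‖_{1(∞)})` to `ℓ₂ᵈ`. -/
noncomputable def opNormOneInfTwo {X A : Type*} [Fintype X] [Fintype A] [Nonempty A]
    {d : ℕ} (m : X → A → EuclideanSpace ℝ (Fin d)) : ℝ :=
  sSup {r : ℝ | ∃ G : X × A → ℝ, normOneInf G ≤ 1 ∧
    r = ‖∑ p : X × A, G p • m p.1 p.2‖}

noncomputable def sgn (b : Bool) : ℝ := if b then 1 else -1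

lemma sgn_sq (b : Bool) : sgn b * sgn b = 1 := by cases b <;> simp [sgn]

lemma sgn_abs (b : Bool) : |sgn b| = 1 := by cases b <;> norm_num [sgn]

lemma sum_sgn_mul {A : Type*} [Fintype A] [DecidableEq A] {a b : A} (hab : a ≠ b) :
    ∑ ε : A → Bool, sgn (ε a) * sgn (ε b) = 0 := by
  apply Finset.sum_ninvolution (fun ε => Function.update ε a (!ε a))
  · intro ε
    have h1 : Function.update ε a (!ε a) a = !ε a := by simp
    have h2 : Function.update ε a (!ε a) b = ε b := Function.update_of_ne (Ne.symm hab) _ _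
    rw [h1, h2]
    cases ε a <;> cases ε b <;> norm_num [sgn]
  · intro ε _ h
    have := congrFun h a
    simp at this
  · intro ε; exact Finset.mem_univ _
  · intro ε
    funext c
    by_cases hc : c = a
    · subst hc; simp
    · simp [Function.update_of_ne hc]

lemma rademacher_avg {A : Type*} [Fintype A] [DecidableEq A] {d : ℕ}
    (v : A → EuclideanSpace ℝ (Fin d)) :
    ∑ ε : A → Bool, ‖∑ a : A, sgn (ε a) • v a‖ ^ 2
      = 2 ^ (Fintype.card A) * ∑ a : A, ‖v a‖ ^ 2 := by
  classical
  have expand : ∀ ε : A → Bool, ‖∑ a : A, sgn (ε a) • v a‖ ^ 2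
      = ∑ a : A, ∑ b : A, (sgn (ε a) * sgn (ε b)) * inner ℝ (v a) (v b) := by
    intro ε
    rw [← real_inner_self_eq_norm_sq, sum_inner]
    refine Finset.sum_congr rfl fun a _ => ?_
    rw [inner_sum]
    refine Finset.sum_congr rfl fun b _ => ?_
    rw [real_inner_smul_left, real_inner_smul_right]
    ring
  simp_rw [expand]
  rw [Finset.sum_comm]
  have key1 : ∀ a : A, ∑ ε : A → Bool, ∑ b : A, (sgn (ε a) * sgn (ε b)) * inner ℝ (v a) (v b)
      = 2 ^ (Fintype.card A) * ‖v a‖ ^ 2 := by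
    intro a
    rw [Finset.sum_comm]
    have key : ∀ b : A, ∑ ε : A → Bool, (sgn (ε a) * sgn (ε b)) * inner ℝ (v a) (v b)
        = if b = a then 2 ^ (Fintype.card A) * ‖v a‖ ^ 2 else 0 := by
      intro b
      rw [← Finset.sum_mul]
      by_cases hb : b = a
      · subst hb
        simp_rw [sgn_sq]
        rw [Finset.sum_const, real_inner_self_eq_norm_sq]
        simp [Fintype.card_fun]
      · rw [sum_sgn_mul (Ne.symm hb), zero_mul, if_neg hb]
    rw [Finset.sum_congr rfl fun b _ => key b, Finset.sum_ite_eq' Finset.univ a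
      (fun _ => (2:ℝ) ^ (Fintype.card A) * ‖v a‖ ^ 2)]
    simp
  simp only [key1]
  rw [Finset.mul_sum]

/-- For every `x`, the squared `1(∞) → 2` operator norm dominates
`∑_a ‖m_{x,a}‖₂²`. -/
theorem stmt9 {X A : Type*} [Fintype X] [Fintype A] [Nonempty X] [Nonempty A]
    {d : ℕ} (m : X → A → EuclideanSpace ℝ (Fin d)) (x : X) :
    (∑ a : A, ‖m x a‖ ^ 2) ≤ (opNormOneInfTwo m) ^ 2 := by
  classical
  obtain ⟨ε, -, hε⟩ : ∃ ε ∈ (Finset.univ : Finset (A → Bool)),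
      (∑ a : A, ‖m x a‖ ^ 2) ≤ ‖∑ a : A, sgn (ε a) • m x a‖ ^ 2 := by
    apply Finset.exists_le_of_sum_le Finset.univ_nonempty
    rw [rademacher_avg (fun a => m x a), Finset.sum_const]
    simp [Fintype.card_fun]
  set G : X × A → ℝ := fun p => if p.1 = x then sgn (ε p.2) else 0 with hG
  have hSG : ∑ p : X × A, G p • m p.1 p.2 = ∑ a : A, sgn (ε a) • m x a := by
    rw [Fintype.sum_prod_type]
    rw [Finset.sum_eq_single x]
    · exact Finset.sum_congr rfl fun a _ => by simp [hG]
    · intro b _ hbx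
      apply Finset.sum_eq_zero
      intro a _
      simp [hG, hbx]
    · intro h; exact absurd (Finset.mem_univ x) h
  have hnorm : normOneInf G ≤ 1 := by
    unfold normOneInf
    have key : ∀ y : X, (Finset.univ.sup' Finset.univ_nonempty (fun a : A => |G (y, a)|))
        = if y = x then 1 else 0 := by
      intro y
      by_cases hy : y = x
      · subst hy
        have h : (fun a : A => |G (y, a)|) = fun _ => (1:ℝ) := by
          funext a; simp [hG, sgn_abs]
        rw [h, Finset.sup'_const]
        simp
      · have h : (fun a : A => |G (y, a)|) = fun _ => (0:ℝ) := by
          funext a; simp [hG, hy]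
        rw [h, Finset.sup'_const]
        simp [hy]
    rw [Finset.sum_congr rfl fun y _ => key y]
    simp
  have hmem : ‖∑ p : X × A, G p • m p.1 p.2‖ ∈
      {r : ℝ | ∃ G : X × A → ℝ, normOneInf G ≤ 1 ∧
        r = ‖∑ p : X × A, G p • m p.1 p.2‖} := ⟨G, hnorm, rfl⟩
  have hbdd : BddAbove {r : ℝ | ∃ G : X × A → ℝ, normOneInf G ≤ 1 ∧
      r = ‖∑ p : X × A, G p • m p.1 p.2‖} := by
    refine ⟨∑ p : X × A, ‖m p.1 p.2‖, ?_⟩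
    rintro r ⟨H, hH, rfl⟩
    calc ‖∑ p : X × A, H p • m p.1 p.2‖ ≤ ∑ p : X × A, ‖H p • m p.1 p.2‖ :=
          norm_sum_le _ _
      _ ≤ ∑ p : X × A, ‖m p.1 p.2‖ := by
          apply Finset.sum_le_sum
          intro p _
          rw [norm_smul]
          have h1 : |H p| ≤ 1 := by
            calc |H p| ≤ Finset.univ.sup' Finset.univ_nonempty
                  (fun a : A => |H (p.1, a)|) :=
                Finset.le_sup' (fun a : A => |H (p.1, a)|) (Finset.mem_univ p.2)
              _ ≤ ∑ y : X, Finset.univ.sup' Finset.univ_nonempty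
                  (fun a : A => |H (y, a)|) := by
                  apply Finset.single_le_sum (f := fun y : X =>
                    Finset.univ.sup' Finset.univ_nonempty (fun a : A => |H (y, a)|))
                    (fun y _ => ?_) (Finset.mem_univ p.1)
                  exact le_trans (abs_nonneg (H (y, Classical.arbitrary A)))
                    (Finset.le_sup' (fun a : A => |H (y, a)|)
                      (Finset.mem_univ (Classical.arbitrary A)))
              _ ≤ 1 := hH
          calc ‖H p‖ * ‖m p.1 p.2‖ ≤ 1 * ‖m p.1 p.2‖ := by
                apply mul_le_mul_of_nonneg_right _ (norm_nonneg _)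
                simpa [Real.norm_eq_abs] using h1
            _ = ‖m p.1 p.2‖ := one_mul _
  have hle : ‖∑ p : X × A, G p • m p.1 p.2‖ ≤ opNormOneInfTwo m :=
    le_csSup hbdd hmem
  calc (∑ a : A, ‖m x a‖ ^ 2) ≤ ‖∑ a : A, sgn (ε a) • m x a‖ ^ 2 := hε
    _ = ‖∑ p : X × A, G p • m p.1 p.2‖ ^ 2 := by rw [hSG]
    _ ≤ (opNormOneInfTwo m) ^ 2 := pow_le_pow_left₀ (norm_nonneg _) hle 2
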